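/- arXiv:1203.1557 — 2 statements merged into one kernel-verified Lean document; each statement's English description precedes it below -/
import Mathlib

section
/- For every integer n ≥ 2, the sum over k from 2 to n of H_k/(k−1) equals (1/2)·(H_{n+1}^2 + H_{n+1}^{(2)}) − (2n+1)/(n(n+1))·H_{n+1} + n/(n+1). -/
/-- The `n`-th harmonic number `H_n = ∑_{k=1}^n 1/k`, with `H_0 = 0`. -/
def H (n : ℕ) : ℚ := ∑ k ∈ Finset.range n, 1 / ((k : ℚ) + 1)

/-- The generalized harmonic number of order 2, `H_n^{(2)} = ∑_{k=1}^n 1/k^2`, with `H_0^{(2)} = 0`. -/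
def H2 (n : ℕ) : ℚ := ∑ k ∈ Finset.range n, 1 / ((k : ℚ) + 1) ^ 2

lemma H_succ (n : ℕ) : H (n + 1) = H n + 1 / ((n : ℚ) + 1) := by
  simp [H, Finset.sum_range_succ]

lemma H2_succ (n : ℕ) : H2 (n + 1) = H2 n + 1 / ((n : ℚ) + 1) ^ 2 := by
  simp [H2, Finset.sum_range_succ]

theorem stmt_6 (n : ℕ) (hn : 2 ≤ n) :
    ∑ k ∈ Finset.Icc 2 n, H k / ((k : ℚ) - 1) =
      (1 / 2) * (H (n + 1) ^ 2 + H2 (n + 1))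
        - (2 * (n : ℚ) + 1) / ((n : ℚ) * ((n : ℚ) + 1)) * H (n + 1)
        + (n : ℚ) / ((n : ℚ) + 1) := by
  induction n, hn using Nat.le_induction with
  | base =>
      norm_num [H, H2, Finset.sum_range_succ, Finset.Icc_self]
  | succ n hn ih =>
      rw [Finset.sum_Icc_succ_top (by omega : 2 ≤ n + 1), ih]
      have hn0 : (n : ℚ) ≠ 0 := by positivity
      have h1 : (n : ℚ) + 1 ≠ 0 := by positivity
      have h2 : (n : ℚ) + 2 ≠ 0 := by positivity
      rw [H_succ (n + 1), H2_succ (n + 1)]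
      push_cast
      field_simp
      ring_nf
      field_simp
      ring
end

section
/- For every integer n ≥ 3, the sum over k from 3 to n of H_{n−k}/((k+1)k(k−1)(k−2)) equals ((n^3−n−12)/(18(n−1)n(n+1)))·H_{n+1} − (9n^5+9n^4−41n^3−81n^2+32n+24)/(36(n−1)^2 n^2 (n+1)^2). -/
open Finset

lemma Hsucc (m : ℕ) : H (m + 1) = H m + 1 / ((m : ℚ) + 1) := by
  simp [H, Finset.sum_range_succ]

lemma sA (m : ℕ) : ∑ k ∈ Icc 3 (m + 3), (1 : ℚ) / ((k : ℚ) + 1) = H (m + 4) - 11/6 := by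
  induction m with
  | zero => norm_num [show Icc 3 3 = {3} from rfl, H, Finset.sum_range_succ]
  | succ p ih =>
      rw [show p + 1 + 3 = (p + 3) + 1 by ring, Finset.sum_Icc_succ_top (by omega), ih,
        show p + 1 + 4 = (p + 4) + 1 by ring, Hsucc (p+4)]
      push_cast; ring

lemma sB (m : ℕ) : ∑ k ∈ Icc 3 (m + 3), (1 : ℚ) / (k : ℚ) = H (m + 3) - 3/2 := by
  induction m with
  | zero => norm_num [show Icc 3 3 = {3} from rfl, H, Finset.sum_range_succ]
  | succ p ih =>
      rw [show p + 1 + 3 = (p + 3) + 1 by ring, Finset.sum_Icc_succ_top (by omega), ih,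
        Hsucc (p+3)]
      push_cast; ring

lemma sC (m : ℕ) : ∑ k ∈ Icc 3 (m + 3), (1 : ℚ) / ((k : ℚ) - 1) = H (m + 2) - 1 := by
  induction m with
  | zero => norm_num [show Icc 3 3 = {3} from rfl, H, Finset.sum_range_succ]
  | succ p ih =>
      rw [show p + 1 + 3 = (p + 3) + 1 by ring, Finset.sum_Icc_succ_top (by omega), ih,
        show p + 1 + 2 = (p + 2) + 1 by ring, Hsucc (p+2)]
      push_cast; ring

lemma sD (m : ℕ) : ∑ k ∈ Icc 3 (m + 3), (1 : ℚ) / ((k : ℚ) - 2) = H (m + 1) := by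
  induction m with
  | zero => norm_num [show Icc 3 3 = {3} from rfl, H, Finset.sum_range_succ]
  | succ p ih =>
      rw [show p + 1 + 3 = (p + 3) + 1 by ring, Finset.sum_Icc_succ_top (by omega), ih,
        show p + 1 + 1 = (p + 1) + 1 by ring, Hsucc (p+1)]
      push_cast; ring

lemma sE (m : ℕ) : ∑ k ∈ Icc 3 (m + 3), (1 : ℚ) / ((m : ℚ) + 4 - (k : ℚ)) = H (m + 1) := by
  rw [H]
  refine Finset.sum_nbij' (fun k => m + 3 - k) (fun j => m + 3 - j) ?_ ?_ ?_ ?_ ?_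
  · intro a ha; simp only [mem_Icc] at ha; simp only [mem_range]; omega
  · intro a ha; simp only [mem_range] at ha; simp only [mem_Icc]; omega
  · intro a ha; simp only [mem_Icc] at ha; show m + 3 - (m + 3 - a) = a; omega
  · intro a ha; simp only [mem_range] at ha; show m + 3 - (m + 3 - a) = a; omega
  · intro a ha
    simp only [mem_Icc] at ha
    have h1 : ((m + 3 - a : ℕ) : ℚ) = (m : ℚ) + 3 - (a : ℚ) := by
      push_cast [Nat.cast_sub (by omega : a ≤ m + 3)]; ring
    rw [h1]; ring_nf

lemma Dlem (m : ℕ) :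
    ∑ k ∈ Icc 3 (m + 3),
        (1 : ℚ) / (((m : ℚ) + 4 - (k : ℚ)) * (((k : ℚ) + 1) * (k : ℚ) * ((k : ℚ) - 1) * ((k : ℚ) - 2)))
      = (-1 / (6 * ((m : ℚ) + 5))) * (H (m + 4) - 11/6)
        + (1 / (2 * ((m : ℚ) + 4))) * (H (m + 3) - 3/2)
        + (-1 / (2 * ((m : ℚ) + 3))) * (H (m + 2) - 1)
        + (1 / (6 * ((m : ℚ) + 2))) * H (m + 1)
        + (1 / (((m : ℚ) + 5) * ((m : ℚ) + 4) * ((m : ℚ) + 3) * ((m : ℚ) + 2))) * H (m + 1) := by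
  have key : ∀ k ∈ Icc 3 (m + 3),
      (1 : ℚ) / (((m : ℚ) + 4 - (k : ℚ)) * (((k : ℚ) + 1) * (k : ℚ) * ((k : ℚ) - 1) * ((k : ℚ) - 2)))
        = (-1 / (6 * ((m : ℚ) + 5))) * (1 / ((k : ℚ) + 1))
          + (1 / (2 * ((m : ℚ) + 4))) * (1 / (k : ℚ))
          + (-1 / (2 * ((m : ℚ) + 3))) * (1 / ((k : ℚ) - 1))
          + (1 / (6 * ((m : ℚ) + 2))) * (1 / ((k : ℚ) - 2))
          + (1 / (((m : ℚ) + 5) * ((m : ℚ) + 4) * ((m : ℚ) + 3) * ((m : ℚ) + 2)))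
              * (1 / ((m : ℚ) + 4 - (k : ℚ))) := by
    intro k hk
    simp only [mem_Icc] at hk
    have h3 : (3 : ℚ) ≤ (k : ℚ) := by exact_mod_cast hk.1
    have hub : (k : ℚ) ≤ (m : ℚ) + 3 := by exact_mod_cast hk.2
    have h0 : (k : ℚ) ≠ 0 := by linarith
    have h1 : (k : ℚ) - 1 ≠ 0 := by intro h; nlinarith [h]
    have h2 : (k : ℚ) - 2 ≠ 0 := by intro h; nlinarith [h]
    have h4 : (k : ℚ) + 1 ≠ 0 := by intro h; nlinarith [h]
    have h5 : (m : ℚ) + 4 - (k : ℚ) ≠ 0 := by intro h; nlinarith [h]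
    have hm2 : (m : ℚ) + 2 ≠ 0 := by positivity
    have hm3 : (m : ℚ) + 3 ≠ 0 := by positivity
    have hm4 : (m : ℚ) + 4 ≠ 0 := by positivity
    have hm5 : (m : ℚ) + 5 ≠ 0 := by positivity
    field_simp
    ring
  rw [Finset.sum_congr rfl key]
  simp only [Finset.sum_add_distrib, ← Finset.mul_sum]
  rw [sA, sB, sC, sD, sE]

theorem stmt_19 (n : ℕ) (hn : 3 ≤ n) :
    ∑ k ∈ Finset.Icc 3 n, H (n - k) / (((k : ℚ) + 1) * (k : ℚ) * ((k : ℚ) - 1) * ((k : ℚ) - 2)) =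
      (((n : ℚ) ^ 3 - (n : ℚ) - 12) / (18 * ((n : ℚ) - 1) * (n : ℚ) * ((n : ℚ) + 1))) * H (n + 1)
        - (9 * (n : ℚ) ^ 5 + 9 * (n : ℚ) ^ 4 - 41 * (n : ℚ) ^ 3 - 81 * (n : ℚ) ^ 2
            + 32 * (n : ℚ) + 24)
          / (36 * ((n : ℚ) - 1) ^ 2 * (n : ℚ) ^ 2 * ((n : ℚ) + 1) ^ 2) := by
  obtain ⟨m, rfl⟩ : ∃ m, n = m + 3 := ⟨n - 3, by omega⟩
  clear hn
  induction m with
  | zero =>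
      norm_num [show Icc 3 3 = {3} from rfl, H, Finset.sum_range_succ]
  | succ p ih =>
      have hsplit : ∀ k ∈ Icc 3 (p + 3), H (p + 1 + 3 - k)
          = H (p + 3 - k) + 1 / ((p : ℚ) + 4 - (k : ℚ)) := by
        intro k hk
        simp only [mem_Icc] at hk
        have e1 : p + 1 + 3 - k = (p + 3 - k) + 1 := by omega
        have e2 : ((p + 3 - k : ℕ) : ℚ) = (p : ℚ) + 3 - (k : ℚ) := by
          push_cast [Nat.cast_sub (by omega : k ≤ p + 3)]; ring
        rw [e1, Hsucc, e2]; ring_nf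
      rw [show p + 1 + 3 = (p + 3) + 1 by ring, Finset.sum_Icc_succ_top (by omega)]
      rw [show p + 3 + 1 - (p + 3 + 1) = 0 by omega]
      have hz : H 0 = 0 := by simp [H]
      rw [show (p:ℕ) + 3 + 1 = p + 1 + 3 by ring]
      rw [Finset.sum_congr rfl (fun k hk => by
        rw [hsplit k hk, add_div])]
      rw [Finset.sum_add_distrib, ih, hz, zero_div, add_zero]
      have hD := Dlem p
      have hrw : ∑ k ∈ Icc 3 (p + 3),
          (1 : ℚ) / ((p : ℚ) + 4 - (k : ℚ)) / (((k : ℚ) + 1) * (k : ℚ) * ((k : ℚ) - 1) * ((k : ℚ) - 2))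
          = ∑ k ∈ Icc 3 (p + 3),
          (1 : ℚ) / (((p : ℚ) + 4 - (k : ℚ)) * (((k : ℚ) + 1) * (k : ℚ) * ((k : ℚ) - 1) * ((k : ℚ) - 2))) := by
        refine Finset.sum_congr rfl fun k hk => ?_
        rw [div_div]
      rw [hrw, hD]
      -- now a rational identity in H values
      rw [show p + 1 + 3 + 1 = (p + 4) + 1 by ring, Hsucc (p+4),
          show (p:ℕ) + 4 = (p + 3) + 1 by ring, Hsucc (p+3),
          show (p:ℕ) + 3 = (p + 2) + 1 by ring, Hsucc (p+2),
          show (p:ℕ) + 2 = (p + 1) + 1 by ring, Hsucc (p+1)]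
      have hm2 : (p : ℚ) + 2 ≠ 0 := by positivity
      have hm3 : (p : ℚ) + 3 ≠ 0 := by positivity
      have hm4 : (p : ℚ) + 4 ≠ 0 := by positivity
      have hm5 : (p : ℚ) + 5 ≠ 0 := by positivity
      have hm1 : (p : ℚ) + 1 ≠ 0 := by positivity
      push_cast
      have hm1' : (p : ℚ) + 1 + 1 + 1 - 1 ≠ 0 := by ring_nf; positivity
      have hm2' : (p : ℚ) + 1 + 1 + 1 + 1 - 1 ≠ 0 := by ring_nf; positivity
      field_simp
      ring
end
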